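/- For the 4-point neighborhood: if S ⊆ ℤ² is such that every x ∈ S has at most 2 orthogonal neighbors in S, then the upper density of S is at most 2/3; moreover the set {x ∈ ℤ² : x₁ ≢ x₂ (mod 3)} has every element with exactly 2 orthogonal neighbors in it and has density exactly 2/3. (Hence δ₄(2) = 2/3.) -/

import Mathlib

open Filter Topology

/-- `y` is an orthogonal (von Neumann) neighbor of `x` in `ℤ²`. -/
def IsOrthNbr (x y : ℤ × ℤ) : Prop :=
  y - x ∈ ({(1, 0), (-1, 0), (0, 1), (0, -1)} : Set (ℤ × ℤ))

/-- The number of orthogonal neighbors of `x` lying in `S`. -/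
noncomputable def orthNbrCount (S : Set (ℤ × ℤ)) (x : ℤ × ℤ) : ℕ :=
  Set.ncard {y ∈ S | IsOrthNbr x y}

/-- The box `B_r = {x : |x₁| < r, |x₂| < r}`. -/
def box (r : ℕ) : Set (ℤ × ℤ) :=
  {x | |x.1| < (r : ℤ) ∧ |x.2| < (r : ℤ)}

/-- The upper density of `S ⊆ ℤ²`: `limsup_{r → ∞} |S ∩ B_r| / (2r-1)²`. -/
noncomputable def upperDensity (S : Set (ℤ × ℤ)) : ℝ :=
  limsup (fun r : ℕ => (Set.ncard (S ∩ box r) : ℝ) / (2 * (r : ℝ) - 1) ^ 2) atTop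

/-- `S` has density `d`: the sequence `|S ∩ B_r| / (2r-1)²` tends to `d`. -/
def HasDensity (S : Set (ℤ × ℤ)) (d : ℝ) : Prop :=
  Tendsto (fun r : ℕ => (Set.ncard (S ∩ box r) : ℝ) / (2 * (r : ℝ) - 1) ^ 2) atTop (𝓝 d)

/-! ### Auxiliary material -/

/-- The finset of the four orthogonal directions. -/
def dirs : Finset (ℤ × ℤ) := {(1, 0), (-1, 0), (0, 1), (0, -1)}

lemma card_dirs : dirs.card = 4 := by decide

/-- The box as a finset. -/
noncomputable def boxF (r : ℕ) : Finset (ℤ × ℤ) :=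
  (Finset.Icc (1 - (r : ℤ)) ((r : ℤ) - 1)) ×ˢ (Finset.Icc (1 - (r : ℤ)) ((r : ℤ) - 1))

lemma mem_boxF {r : ℕ} {x : ℤ × ℤ} :
    x ∈ boxF r ↔ (1 - (r:ℤ) ≤ x.1 ∧ x.1 ≤ (r:ℤ) - 1) ∧ (1 - (r:ℤ) ≤ x.2 ∧ x.2 ≤ (r:ℤ) - 1) := by
  simp [boxF, Finset.mem_product, Finset.mem_Icc]

lemma box_eq_boxF (r : ℕ) : box r = ↑(boxF r) := by
  ext x
  simp only [box, Set.mem_setOf_eq, Finset.coe_sort_coe, Finset.mem_coe, mem_boxF, abs_lt]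
  omega

lemma card_boxF (r : ℕ) (hr : 1 ≤ r) : (boxF r).card = (2 * r - 1) ^ 2 := by
  have h : (Finset.Icc (1 - (r:ℤ)) ((r:ℤ) - 1)).card = 2 * r - 1 := by
    rw [Int.card_Icc]; omega
  simp only [boxF, Finset.card_product, h]; ring

open Classical in
lemma ncard_inter_box (S : Set (ℤ × ℤ)) (r : ℕ) :
    Set.ncard (S ∩ box r) = ((boxF r).filter (· ∈ S)).card := by
  rw [← Set.ncard_coe_finset]
  congr 1
  rw [box_eq_boxF]
  ext x
  simp [Finset.mem_filter, and_comm]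

open Classical in
lemma orthNbrCount_eq (S : Set (ℤ × ℤ)) (x : ℤ × ℤ) :
    orthNbrCount S x = (dirs.filter (fun d => x + d ∈ S)).card := by
  have hinj : Function.Injective (fun d : ℤ × ℤ => x + d) := fun a b h => by
    simpa using add_left_cancel h
  rw [orthNbrCount, ← Finset.card_image_of_injective _ hinj, ← Set.ncard_coe_finset]
  congr 1
  ext y
  simp only [Set.mem_setOf_eq, Finset.coe_image, Set.mem_image, Finset.mem_coe,
    Finset.mem_filter, IsOrthNbr, dirs]
  constructor
  · rintro ⟨hyS, hd⟩
    refine ⟨y - x, ⟨?_, by simpa using hyS⟩, by ring⟩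
    simpa [Prod.ext_iff] using hd
  · rintro ⟨d, ⟨hd, hS⟩, rfl⟩
    refine ⟨hS, ?_⟩
    simpa [Prod.ext_iff] using hd

/-! ### Part 1: the upper bound -/

open Classical in
lemma key_count (S : Set (ℤ × ℤ)) (hS : ∀ x ∈ S, orthNbrCount S x ≤ 2) (r : ℕ) :
    3 * Set.ncard (S ∩ box r) ≤ 2 * (2 * r + 1) ^ 2 := by
  classical
  set A : Finset (ℤ × ℤ) := (boxF r).filter (· ∈ S) with hA
  set P : Finset ((ℤ × ℤ) × (ℤ × ℤ)) :=
    (A ×ˢ dirs).filter (fun p => p.1 + p.2 ∉ S) with hP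
  have hlow : 2 * A.card ≤ P.card := by
    have hcard : P.card = ∑ x ∈ A, ((dirs.filter (fun d => x + d ∉ S)).card) := by
      rw [hP, Finset.card_filter, Finset.sum_product]
      simp [Finset.card_filter]
    rw [hcard]
    have hb : ∀ x ∈ A, 2 ≤ (dirs.filter (fun d => x + d ∉ S)).card := by
      intro x hx
      have hxS : x ∈ S := (Finset.mem_filter.mp hx).2
      have h1 : (dirs.filter (fun d => x + d ∈ S)).card ≤ 2 := by
        rw [← orthNbrCount_eq]; exact hS x hxS
      have h2 : (dirs.filter (fun d => x + d ∈ S)).card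
          + (dirs.filter (fun d => ¬ (x + d ∈ S))).card = dirs.card :=
        Finset.card_filter_add_card_filter_not _
      rw [card_dirs] at h2
      omega
    calc 2 * A.card = A.card * 2 := by ring
    _ ≤ _ := by simpa using Finset.card_nsmul_le_sum A _ 2 hb
  set B : Finset (ℤ × ℤ) := (boxF (r + 1)).filter (· ∉ S) with hB
  have hup : P.card ≤ B.card * 4 := by
    rw [← card_dirs, ← Finset.card_product]
    apply Finset.card_le_card_of_injOn (fun p => (p.1 + p.2, p.2))
    · rintro ⟨x, d⟩ hp
      have h1 := Finset.mem_filter.mp hp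
      have h2 := Finset.mem_product.mp h1.1
      have hx : x ∈ boxF r := (Finset.mem_filter.mp h2.1).1
      have hd : d ∈ dirs := h2.2
      rw [Finset.mem_coe, Finset.mem_product]
      refine ⟨Finset.mem_filter.mpr ⟨?_, h1.2⟩, hd⟩
      have hxb := mem_boxF.mp hx
      have hdc : (d = ((1:ℤ), (0:ℤ)) ∨ d = (-1, 0) ∨ d = (0, 1) ∨ d = (0, -1)) := by
        simpa [dirs, Finset.mem_insert] using hd
      rw [mem_boxF]
      push_cast
      rcases hdc with rfl | rfl | rfl | rfl <;> simp_all <;> omega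
    · rintro ⟨x, d⟩ _ ⟨x', d'⟩ _ h
      simp only [Prod.mk.injEq] at h
      obtain ⟨h1, h2⟩ := h
      subst h2
      simpa using add_right_cancel h1
  have hsplit : ((boxF (r+1)).filter (· ∈ S)).card + B.card = (2 * r + 1) ^ 2 := by
    have := card_boxF (r + 1) (by omega)
    rw [hB, (by omega : 2 * (r + 1) - 1 = 2 * r + 1)] at *
    rw [← this]
    exact Finset.card_filter_add_card_filter_not _
  have hsub : A.card ≤ ((boxF (r+1)).filter (· ∈ S)).card := by
    apply Finset.card_le_card
    apply Finset.filter_subset_filter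
    intro x hx
    rw [mem_boxF] at hx ⊢
    push_cast
    omega
  rw [ncard_inter_box, ← hA]
  omega

lemma denom_ne (r : ℕ) : (2 * (r : ℝ) - 1) ≠ 0 := by
  rcases Nat.eq_zero_or_pos r with h | h
  · subst h; norm_num
  · have : (1:ℝ) ≤ (r:ℝ) := by exact_mod_cast h
    nlinarith

lemma denom_pos (r : ℕ) : (0:ℝ) < (2 * (r : ℝ) - 1) ^ 2 := by
  have := denom_ne r
  positivity

lemma tendsto_two_mul_sub_one : Tendsto (fun r : ℕ => 2 * (r:ℝ) - 1) atTop atTop := by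
  apply tendsto_atTop_add_const_right
  exact (tendsto_natCast_atTop_atTop).const_mul_atTop (by norm_num)

lemma tendsto_inv_denom : Tendsto (fun r : ℕ => 1 / (2 * (r:ℝ) - 1)) atTop (𝓝 0) :=
  tendsto_const_nhds.div_atTop tendsto_two_mul_sub_one

lemma tendsto_ratio : Tendsto (fun r : ℕ => (2 * (r:ℝ) + 1) / (2 * (r:ℝ) - 1)) atTop (𝓝 1) := by
  have h2 : Tendsto (fun r : ℕ => 2 / (2 * (r:ℝ) - 1)) atTop (𝓝 0) :=
    tendsto_const_nhds.div_atTop tendsto_two_mul_sub_one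
  have h3 : Tendsto (fun r : ℕ => 1 + 2 / (2 * (r:ℝ) - 1)) atTop (𝓝 (1 + 0)) :=
    tendsto_const_nhds.add h2
  rw [add_zero] at h3
  apply h3.congr
  intro r
  have hne := denom_ne r
  field_simp
  ring

lemma part1 (S : Set (ℤ × ℤ)) (hS : ∀ x ∈ S, orthNbrCount S x ≤ 2) :
    upperDensity S ≤ 2 / 3 := by
  set f := fun r : ℕ => (Set.ncard (S ∩ box r) : ℝ) / (2 * (r : ℝ) - 1) ^ 2 with hf
  set g := fun r : ℕ => (2/3) * ((2 * (r:ℝ) + 1) / (2 * (r:ℝ) - 1)) ^ 2 with hg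
  have hfg : ∀ r, f r ≤ g r := by
    intro r
    have h := key_count S hS r
    have h' : (Set.ncard (S ∩ box r) : ℝ) ≤ (2/3) * (2 * (r:ℝ) + 1) ^ 2 := by
      have := (Nat.cast_le (α := ℝ)).mpr h
      push_cast at this
      linarith
    have hD := denom_pos r
    calc f r = (Set.ncard (S ∩ box r) : ℝ) / (2 * (r:ℝ) - 1) ^ 2 := rfl
    _ ≤ ((2/3) * (2 * (r:ℝ) + 1) ^ 2) / (2 * (r:ℝ) - 1) ^ 2 := by gcongr
    _ = g r := by simp only [hg, div_pow]; ring
  have hg_t : Tendsto g atTop (𝓝 (2/3)) := by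
    have := (tendsto_const_nhds (x := (2:ℝ)/3) (f := atTop (α := ℕ))).mul (tendsto_ratio.pow 2)
    simpa using this
  have hcb : IsCoboundedUnder (· ≤ ·) atTop f :=
    isCoboundedUnder_le_of_le atTop (x := 0) (fun r => by
      have := denom_pos r
      positivity)
  have h1 : limsup f atTop ≤ limsup g atTop :=
    limsup_le_limsup (Eventually.of_forall hfg) hcb hg_t.isBoundedUnder_le
  have h2 : limsup g atTop = 2/3 := hg_t.limsup_eq
  calc upperDensity S = limsup f atTop := rfl
  _ ≤ limsup g atTop := h1
  _ = 2/3 := h2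

/-! ### Part 2: each point of the extremal set has exactly two neighbors -/

lemma part2 (x : ℤ × ℤ) (hx : x ∈ {x : ℤ × ℤ | ¬ x.1 ≡ x.2 [ZMOD 3]}) :
    orthNbrCount {x : ℤ × ℤ | ¬ x.1 ≡ x.2 [ZMOD 3]} x = 2 := by
  have hx' : ¬ (x.1 % 3 = x.2 % 3) := hx
  rcases (by omega : (x.1 - x.2) % 3 = 1 ∨ (x.1 - x.2) % 3 = 2) with h | h
  · have hset : {y ∈ {x : ℤ × ℤ | ¬ x.1 ≡ x.2 [ZMOD 3]} | IsOrthNbr x y}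
        = {(x.1 + 1, x.2), (x.1, x.2 - 1)} := by
      ext ⟨y1, y2⟩
      simp only [Set.mem_setOf_eq, Set.mem_insert_iff, Set.mem_singleton_iff, IsOrthNbr,
        Int.ModEq, Prod.mk.injEq, Prod.ext_iff, Prod.fst_sub, Prod.snd_sub]
      omega
    rw [orthNbrCount, hset, Set.ncard_pair (by simp [Prod.ext_iff])]
  · have hset : {y ∈ {x : ℤ × ℤ | ¬ x.1 ≡ x.2 [ZMOD 3]} | IsOrthNbr x y}
        = {(x.1 - 1, x.2), (x.1, x.2 + 1)} := by
      ext ⟨y1, y2⟩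
      simp only [Set.mem_setOf_eq, Set.mem_insert_iff, Set.mem_singleton_iff, IsOrthNbr,
        Int.ModEq, Prod.mk.injEq, Prod.ext_iff, Prod.fst_sub, Prod.snd_sub]
      omega
    rw [orthNbrCount, hset, Set.ncard_pair (by simp [Prod.ext_iff])]

/-! ### Part 3: the density of the extremal set -/

lemma count_range (lo c : ℤ) (n : ℕ) :
    ((Finset.range n).filter (fun (k : ℕ) => c % 3 = (lo + (k:ℤ)) % 3)).card
      = (n + 2 - ((c - lo) % 3).toNat) / 3 := by
  induction n with
  | zero => simp; omega
  | succ n ih =>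
    rw [Finset.range_add_one, Finset.filter_insert]
    by_cases hn : c % 3 = (lo + (n:ℤ)) % 3
    · rw [if_pos hn, Finset.card_insert_of_notMem (by simp)]
      omega
    · rw [if_neg hn]
      omega

lemma count_Icc (lo c : ℤ) (n : ℕ) :
    ((Finset.Icc lo (lo + n - 1)).filter (fun b => c % 3 = b % 3)).card
      = (n + 2 - ((c - lo) % 3).toNat) / 3 := by
  rw [← count_range lo c n]
  apply Finset.card_bij' (i := fun b _ => (b - lo).toNat) (j := fun (k : ℕ) _ => lo + (k:ℤ))
  · intro b hb
    simp only [Finset.mem_filter, Finset.mem_Icc] at hb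
    simp only [Finset.mem_filter, Finset.mem_range]
    omega
  · intro k hk
    simp only [Finset.mem_filter, Finset.mem_range] at hk
    simp only [Finset.mem_filter, Finset.mem_Icc]
    omega
  · intro b hb
    simp only [Finset.mem_filter, Finset.mem_Icc] at hb
    omega
  · intro k hk
    omega

lemma key_count3 (r : ℕ) (hr : 1 ≤ r) :
    2 * (2*r-1)^2 ≤ 3 * Set.ncard ({x : ℤ × ℤ | ¬ x.1 ≡ x.2 [ZMOD 3]} ∩ box r) + 3 * (2*r-1)
      ∧ 3 * Set.ncard ({x : ℤ × ℤ | ¬ x.1 ≡ x.2 [ZMOD 3]} ∩ box r) ≤ 2 * (2*r-1)^2 + 3 * (2*r-1) := by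
  set N : ℕ := 2 * r - 1 with hN
  have h0 : {x : ℤ × ℤ | ¬ x.1 ≡ x.2 [ZMOD 3]} ∩ box r
      = ↑((boxF r).filter (fun x : ℤ × ℤ => ¬ (x.1 % 3 = x.2 % 3))) := by
    rw [box_eq_boxF]
    ext x
    simp only [Set.mem_inter_iff, Set.mem_setOf_eq, Finset.coe_filter, Int.ModEq,
      Finset.mem_coe]
    tauto
  set a : ℕ := Set.ncard ({x : ℤ × ℤ | ¬ x.1 ≡ x.2 [ZMOD 3]} ∩ box r) with ha
  set cong : ℕ := ((boxF r).filter (fun x : ℤ × ℤ => x.1 % 3 = x.2 % 3)).card with hcong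
  have ha' : a = ((boxF r).filter (fun x : ℤ × ℤ => ¬ (x.1 % 3 = x.2 % 3))).card := by
    rw [ha, h0, Set.ncard_coe_finset]
  -- a + cong = N^2
  have hsplit : a + cong = N ^ 2 := by
    rw [ha', hcong, ← card_boxF r hr, add_comm]
    exact Finset.card_filter_add_card_filter_not _
  -- row decomposition of cong
  have hIcc : Finset.Icc (1 - (r:ℤ)) ((r:ℤ) - 1)
      = Finset.Icc (1 - (r:ℤ)) ((1 - (r:ℤ)) + (N:ℤ) - 1) := by
    congr 1
    omega
  have hrow : ∀ c : ℤ, ((Finset.Icc (1 - (r:ℤ)) ((r:ℤ) - 1)).filter (fun b => c % 3 = b % 3)).card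
      = (N + 2 - ((c - (1 - (r:ℤ))) % 3).toNat) / 3 := by
    intro c
    rw [hIcc]
    exact count_Icc _ c N
  have hcong_sum : cong = ∑ c ∈ Finset.Icc (1 - (r:ℤ)) ((r:ℤ) - 1),
      ((Finset.Icc (1 - (r:ℤ)) ((r:ℤ) - 1)).filter (fun b => c % 3 = b % 3)).card := by
    rw [hcong, boxF, Finset.card_filter, Finset.sum_product]
    exact Finset.sum_congr rfl (fun c _ => (Finset.card_filter _ _).symm)
  have hIccCard : (Finset.Icc (1 - (r:ℤ)) ((r:ℤ) - 1)).card = N := by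
    rw [Int.card_Icc]; omega
  -- bounds on cong
  have hcong_lb : N * (N / 3) ≤ cong := by
    rw [hcong_sum, ← hIccCard]
    apply Finset.card_nsmul_le_sum
    intro c _
    rw [hrow c]
    omega
  have hcong_ub : cong ≤ N * (N / 3 + 1) := by
    rw [hcong_sum, ← hIccCard]
    apply Finset.sum_le_card_nsmul
    intro c _
    rw [hrow c]
    omega
  -- arithmetic
  have hq1 : 3 * (N / 3) ≤ N := by omega
  have hq2 : N ≤ 3 * (N / 3) + 2 := by omega
  constructor
  · nlinarith [hsplit, hcong_ub, hq1, hq2]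
  · nlinarith [hsplit, hcong_lb, hq1, hq2]

lemma part3 : HasDensity {x : ℤ × ℤ | ¬ x.1 ≡ x.2 [ZMOD 3]} (2 / 3) := by
  rw [HasDensity]
  have hlo : Tendsto (fun r : ℕ => 2/3 - 1 / (2 * (r:ℝ) - 1)) atTop (𝓝 (2/3)) := by
    have := (tendsto_const_nhds (x := (2:ℝ)/3) (f := atTop (α := ℕ))).sub tendsto_inv_denom
    simpa using this
  have hhi : Tendsto (fun r : ℕ => 2/3 + 1 / (2 * (r:ℝ) - 1)) atTop (𝓝 (2/3)) := by
    have := (tendsto_const_nhds (x := (2:ℝ)/3) (f := atTop (α := ℕ))).add tendsto_inv_denom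
    simpa using this
  apply tendsto_of_tendsto_of_tendsto_of_le_of_le' hlo hhi
  · filter_upwards [eventually_ge_atTop 1] with r hr
    obtain ⟨h1, h2⟩ := key_count3 r hr
    set a : ℕ := Set.ncard ({x : ℤ × ℤ | ¬ x.1 ≡ x.2 [ZMOD 3]} ∩ box r)
    have hNr : ((2*r-1 : ℕ) : ℝ) = 2 * (r:ℝ) - 1 := by
      have h12 : 1 ≤ 2 * r := by omega
      push_cast [Nat.cast_sub h12]
      ring
    have hNpos : (1:ℝ) ≤ 2 * (r:ℝ) - 1 := by
      rw [← hNr]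
      exact_mod_cast Nat.one_le_iff_ne_zero.mpr (by omega)
    have hNne : (2 * (r:ℝ) - 1) ≠ 0 := by linarith
    have hD : (0:ℝ) < (2 * (r:ℝ) - 1) ^ 2 := by positivity
    have h1' : 2 * (2 * (r:ℝ) - 1)^2 ≤ 3 * (a:ℝ) + 3 * (2 * (r:ℝ) - 1) := by
      have := (Nat.cast_le (α := ℝ)).mpr h1
      push_cast [hNr] at this
      linarith
    rw [le_div_iff₀ hD]
    have hexp : (2/3 - 1 / (2 * (r:ℝ) - 1)) * (2 * (r:ℝ) - 1) ^ 2
        = 2/3 * (2 * (r:ℝ) - 1) ^ 2 - (2 * (r:ℝ) - 1) := by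
      field_simp
    rw [hexp]
    linarith
  · filter_upwards [eventually_ge_atTop 1] with r hr
    obtain ⟨h1, h2⟩ := key_count3 r hr
    set a : ℕ := Set.ncard ({x : ℤ × ℤ | ¬ x.1 ≡ x.2 [ZMOD 3]} ∩ box r)
    have hNr : ((2*r-1 : ℕ) : ℝ) = 2 * (r:ℝ) - 1 := by
      have h12 : 1 ≤ 2 * r := by omega
      push_cast [Nat.cast_sub h12]
      ring
    have hNpos : (1:ℝ) ≤ 2 * (r:ℝ) - 1 := by
      rw [← hNr]
      exact_mod_cast Nat.one_le_iff_ne_zero.mpr (by omega)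
    have hNne : (2 * (r:ℝ) - 1) ≠ 0 := by linarith
    have hD : (0:ℝ) < (2 * (r:ℝ) - 1) ^ 2 := by positivity
    have h2' : 3 * (a:ℝ) ≤ 2 * (2 * (r:ℝ) - 1)^2 + 3 * (2 * (r:ℝ) - 1) := by
      have := (Nat.cast_le (α := ℝ)).mpr h2
      push_cast [hNr] at this
      linarith
    rw [div_le_iff₀ hD]
    have hexp : (2/3 + 1 / (2 * (r:ℝ) - 1)) * (2 * (r:ℝ) - 1) ^ 2
        = 2/3 * (2 * (r:ℝ) - 1) ^ 2 + (2 * (r:ℝ) - 1) := by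
      field_simp
    rw [hexp]
    linarith

theorem delta4_two :
    (∀ S : Set (ℤ × ℤ), (∀ x ∈ S, orthNbrCount S x ≤ 2) → upperDensity S ≤ 2 / 3) ∧
    (∀ x ∈ {x : ℤ × ℤ | ¬ x.1 ≡ x.2 [ZMOD 3]},
      orthNbrCount {x : ℤ × ℤ | ¬ x.1 ≡ x.2 [ZMOD 3]} x = 2) ∧
    HasDensity {x : ℤ × ℤ | ¬ x.1 ≡ x.2 [ZMOD 3]} (2 / 3) :=
  ⟨part1, part2, part3⟩
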